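/- Let Γ be a map assigning to each point x of a finite set X ⊂ R^d a nonempty closed convex subset Γ(x) of R^d, such that for every subset N ⊆ X the convex hull of N is contained in ∪_{x ∈ N} Γ(x). Then ∩_{x ∈ X} Γ(x) is nonempty. -/

import Mathlib

open Set

variable {E : Type*} [NormedAddCommGroup E] [NormedSpace ℝ E] [DecidableEq E]

omit [DecidableEq E] in
lemma convex_meets {s : Set E} (hs : Convex ℝ s) (f : E →L[ℝ] ℝ) (α : ℝ)
    {a b : E} (ha : a ∈ s) (hb : b ∈ s) (h1 : f a < α) (h2 : α < f b) :
    ∃ c ∈ s, f c = α := by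
  set t : ℝ := (α - f a) / (f b - f a) with ht
  have hba : 0 < f b - f a := by linarith
  have ht0 : 0 ≤ t := div_nonneg (by linarith) hba.le
  have ht1 : t ≤ 1 := by rw [div_le_one hba]; linarith
  refine ⟨(1 - t) • a + t • b, hs ha hb (by linarith) ht0 (by ring), ?_⟩
  have hfc : f ((1 - t) • a + t • b) = (1 - t) * f a + t * f b := by
    simp [map_add, map_smul, smul_eq_mul]
  rw [hfc, ht]
  field_simp
  ring

lemma berge (X : Finset E) :
    ∀ C : E → Set E,
      (∀ x ∈ X, IsCompact (C x)) →
      (∀ x ∈ X, Convex ℝ (C x)) →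
      (∀ x ∈ X, (C x).Nonempty) →
      Convex ℝ (⋃ x ∈ X, C x) →
      (∀ x ∈ X, (⋂ y ∈ X.erase x, C y).Nonempty) →
      (⋂ x ∈ X, C x).Nonempty := by
  induction X using Finset.strongInductionOn with
  | _ X ih =>
  intro C hcomp hconv hne huni hsub
  rcases X.eq_empty_or_nonempty with rfl | ⟨x₀, hx₀⟩
  · simp
  rcases (X.erase x₀).eq_empty_or_nonempty with h1 | ⟨y₁, hy₁⟩
  · have hX : X = {x₀} := by
      apply Finset.eq_singleton_iff_unique_mem.mpr
      refine ⟨hx₀, fun y hy => ?_⟩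
      by_contra hne'
      exact (Finset.eq_empty_iff_forall_notMem.mp h1) y (Finset.mem_erase.mpr ⟨hne', hy⟩)
    subst hX
    simpa using hne x₀ (by simp)
  by_contra hcon
  -- the intersection over the erased family
  set I : Set E := ⋂ y ∈ X.erase x₀, C y with hI
  have hIne : I.Nonempty := hsub x₀ hx₀
  have hIcl : IsClosed I := isClosed_biInter fun y hy =>
    (hcomp y (Finset.mem_of_mem_erase hy)).isClosed
  have hIsub : I ⊆ C y₁ := biInter_subset_of_mem hy₁
  have hIcomp : IsCompact I :=
    (hcomp y₁ (Finset.mem_of_mem_erase hy₁)).of_isClosed_subset hIcl hIsub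
  have hIconv : Convex ℝ I := convex_iInter fun y => convex_iInter fun hy =>
    hconv y (Finset.mem_of_mem_erase hy)
  have hdisj : Disjoint (C x₀) I := by
    rw [Set.disjoint_left]
    intro z hz1 hz2
    apply hcon
    refine ⟨z, mem_iInter₂.mpr fun x hx => ?_⟩
    rcases eq_or_ne x x₀ with rfl | hxx
    · exact hz1
    · exact mem_iInter₂.mp hz2 x (Finset.mem_erase.mpr ⟨hxx, hx⟩)
  obtain ⟨f, u, v, hfu, huv, hfv⟩ :=
    geometric_hahn_banach_compact_closed (hconv x₀ hx₀) (hcomp x₀ hx₀) hIconv hIcl hdisj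
  set α : ℝ := (u + v) / 2 with hα
  have hCx₀ : ∀ a ∈ C x₀, f a < α := fun a ha => by
    have := hfu a ha; simp only [hα]; linarith
  have hIα : ∀ b ∈ I, α < f b := fun b hb => by
    have := hfv b hb; simp only [hα]; linarith
  set H : Set E := f ⁻¹' {α} with hHdef
  have hHcl : IsClosed H := (isClosed_singleton).preimage f.continuous
  have hHconv : Convex ℝ H := (convex_singleton α).linear_preimage (f : E →ₗ[ℝ] ℝ)
  set C' : E → Set E := fun y => C y ∩ H with hC'
  set X' : Finset E := X.erase x₀ with hX'
  have hss : X' ⊂ X := Finset.erase_ssubset hx₀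
  have hmem : ∀ y ∈ X', y ∈ X := fun y hy => Finset.mem_of_mem_erase hy
  -- union of the new family
  have huni' : (⋃ y ∈ X', C' y) = (⋃ x ∈ X, C x) ∩ H := by
    ext z
    simp only [mem_iUnion, mem_inter_iff, exists_prop]
    constructor
    · rintro ⟨y, hy, hz, hzH⟩
      exact ⟨⟨y, hmem y hy, hz⟩, hzH⟩
    · rintro ⟨⟨x, hx, hz⟩, hzH⟩
      rcases eq_or_ne x x₀ with rfl | hxx
      · exfalso
        have h1 := hCx₀ z hz
        have h2 : f z = α := hzH
        rw [h2] at h1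
        exact lt_irrefl _ h1
      · exact ⟨x, Finset.mem_erase.mpr ⟨hxx, hx⟩, hz, hzH⟩
  -- subfamily condition for the new family
  have hsub' : ∀ y ∈ X', (⋂ z ∈ X'.erase y, C' z).Nonempty := by
    intro y hy
    -- the set F := ⋂ z ∈ X'.erase y, C z is convex, contains a point with f < α and one with f > α
    obtain ⟨a, ha⟩ := hsub y (hmem y hy)
    obtain ⟨b, hb⟩ := hIne
    have hFa : a ∈ ⋂ z ∈ X'.erase y, C z := by
      refine mem_iInter₂.mpr fun z hz => ?_
      have hz' : z ∈ X.erase y := by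
        have h1 := Finset.mem_erase.mp hz
        have h2 := Finset.mem_erase.mp h1.2
        exact Finset.mem_erase.mpr ⟨h1.1, h2.2⟩
      exact mem_iInter₂.mp ha z hz'
    have hFb : b ∈ ⋂ z ∈ X'.erase y, C z := by
      refine mem_iInter₂.mpr fun z hz => ?_
      exact mem_iInter₂.mp hb z (Finset.mem_of_mem_erase hz)
    have hfa : f a < α := by
      have hax₀ : a ∈ C x₀ := by
        have hx₀y : x₀ ∈ X.erase y := Finset.mem_erase.mpr
          ⟨fun h => (Finset.mem_erase.mp hy).1 h.symm, hx₀⟩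
        exact mem_iInter₂.mp ha x₀ hx₀y
      exact hCx₀ a hax₀
    have hfb : α < f b := hIα b hb
    have hFconv : Convex ℝ (⋂ z ∈ X'.erase y, C z) :=
      convex_iInter fun z => convex_iInter fun hz =>
        hconv z (hmem z (Finset.mem_of_mem_erase hz))
    obtain ⟨c, hc, hcα⟩ := convex_meets hFconv f α hFa hFb hfa hfb
    refine ⟨c, mem_iInter₂.mpr fun z hz => ⟨mem_iInter₂.mp hc z hz, hcα⟩⟩
  -- nonemptiness of each new set
  have hne' : ∀ y ∈ X', (C' y).Nonempty := by
    intro y hy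
    rcases (X'.erase y).eq_empty_or_nonempty with hey | ⟨z, hz⟩
    · -- X' = {y}; use convexity of the union
      obtain ⟨a, ha⟩ := hne x₀ hx₀
      obtain ⟨b, hb⟩ := hIne
      have haU : a ∈ ⋃ x ∈ X, C x := mem_iUnion₂.mpr ⟨x₀, hx₀, ha⟩
      have hbU : b ∈ ⋃ x ∈ X, C x := mem_iUnion₂.mpr ⟨y₁, hmem y₁ hy₁, hIsub hb⟩
      obtain ⟨c, hc, hcα⟩ := convex_meets huni f α haU hbU (hCx₀ a ha) (hIα b hb)
      obtain ⟨x, hx, hcx⟩ := mem_iUnion₂.mp hc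
      have hxy : x = y := by
        rcases eq_or_ne x x₀ with rfl | hxx
        · exact absurd (hCx₀ c hcx) (by simp [hcα])
        · have : x ∈ X' := Finset.mem_erase.mpr ⟨hxx, hx⟩
          by_contra hxy
          exact (Finset.eq_empty_iff_forall_notMem.mp hey) x
            (Finset.mem_erase.mpr ⟨hxy, this⟩)
      exact ⟨c, hxy ▸ hcx, hcα⟩
    · obtain ⟨p, hp⟩ := hsub' z (Finset.mem_of_mem_erase hz)
      have hyz : y ∈ X'.erase z := Finset.mem_erase.mpr
        ⟨fun h => (Finset.mem_erase.mp hz).1 h.symm, hy⟩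
      exact ⟨p, mem_iInter₂.mp hp y hyz⟩
  -- apply the induction hypothesis
  obtain ⟨p, hp⟩ := ih X' hss C'
    (fun y hy => ((hcomp y (hmem y hy)).inter_right hHcl))
    (fun y hy => (hconv y (hmem y hy)).inter hHconv)
    hne'
    (by rw [huni']; exact huni.inter hHconv)
    hsub'
  have hpI : p ∈ I := mem_iInter₂.mpr fun y hy => (mem_iInter₂.mp hp y hy).1
  have hpH : p ∈ H := (mem_iInter₂.mp hp y₁ hy₁).2
  have := hIα p hpI
  simp only [hHdef, mem_preimage, mem_singleton_iff] at hpH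
  linarith [hpH ▸ this]

lemma kkm_aux (X : Finset E) :
    ∀ Γ : E → Set E,
      (∀ x ∈ X, IsClosed (Γ x)) →
      (∀ x ∈ X, Convex ℝ (Γ x)) →
      (∀ N ⊆ X, convexHull ℝ (N : Set E) ⊆ ⋃ x ∈ N, Γ x) →
      (⋂ x ∈ X, Γ x).Nonempty := by
  induction X using Finset.strongInductionOn with
  | _ X ih =>
  intro Γ hcl hcv hkkm
  set K : Set E := convexHull ℝ (X : Set E) with hK
  have hKc : IsCompact K := X.finite_toSet.isCompact_convexHull ℝ
  have hKconv : Convex ℝ K := convex_convexHull ℝ _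
  have hxΓ : ∀ x ∈ X, x ∈ Γ x := by
    intro x hx
    have h1 : x ∈ convexHull ℝ (({x} : Finset E) : Set E) := by
      simp [subset_convexHull ℝ _ (mem_singleton x)]
    have h2 := hkkm {x} (Finset.singleton_subset_iff.mpr hx) h1
    simpa using h2
  set C : E → Set E := fun x => Γ x ∩ K with hC
  have hCsub : ∀ x₀ ∈ X, (⋂ x ∈ X.erase x₀, C x).Nonempty := by
    intro x₀ hx₀
    set N : Finset E := X.erase x₀ with hN
    have hNX : N ⊆ X := Finset.erase_subset _ _
    have hss : N ⊂ X := Finset.erase_ssubset hx₀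
    obtain ⟨p, hp⟩ := ih N hss (fun x => Γ x ∩ convexHull ℝ (N : Set E))
      (fun x hx => (hcl x (hNX hx)).inter
        ((N.finite_toSet.isCompact_convexHull ℝ).isClosed))
      (fun x hx => (hcv x (hNX hx)).inter (convex_convexHull ℝ _))
      (by
        intro M hM z hz
        have h1 := hkkm M (hM.trans hNX) hz
        have h2 : z ∈ convexHull ℝ (N : Set E) :=
          convexHull_mono (by exact_mod_cast hM) hz
        obtain ⟨x, hx, hzx⟩ := mem_iUnion₂.mp h1
        exact mem_iUnion₂.mpr ⟨x, hx, hzx, h2⟩)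
    refine ⟨p, mem_iInter₂.mpr fun x hx => ?_⟩
    have := mem_iInter₂.mp hp x hx
    exact ⟨this.1, convexHull_mono (by exact_mod_cast hNX) this.2⟩
  have hUK : (⋃ x ∈ X, C x) = K := by
    apply Subset.antisymm
    · exact iUnion₂_subset fun x hx => inter_subset_right
    · intro z hz
      obtain ⟨x, hx, hzx⟩ := mem_iUnion₂.mp (hkkm X Finset.Subset.rfl hz)
      exact mem_iUnion₂.mpr ⟨x, hx, hzx, hz⟩
  obtain ⟨q, hq⟩ := berge X C
    (fun x hx => hKc.inter_left (hcl x hx))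
    (fun x hx => (hcv x hx).inter hKconv)
    (fun x hx => ⟨x, hxΓ x hx, subset_convexHull ℝ _ hx⟩)
    (by rw [hUK]; exact hKconv)
    hCsub
  exact ⟨q, mem_iInter₂.mpr fun x hx => (mem_iInter₂.mp hq x hx).1⟩

/-- Finite KKM theorem with closed convex values (Ben-El-Mechaiekh). -/
theorem finite_kkm (d : ℕ) (X : Finset (EuclideanSpace ℝ (Fin d)))
    (Γ : EuclideanSpace ℝ (Fin d) → Set (EuclideanSpace ℝ (Fin d)))
    (hne : ∀ x ∈ X, (Γ x).Nonempty)
    (hcl : ∀ x ∈ X, IsClosed (Γ x))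
    (hcv : ∀ x ∈ X, Convex ℝ (Γ x))
    (hkkm : ∀ N ⊆ X, convexHull ℝ (N : Set (EuclideanSpace ℝ (Fin d))) ⊆
      ⋃ x ∈ N, Γ x) :
    (⋂ x ∈ X, Γ x).Nonempty := by
  classical
  exact kkm_aux X Γ hcl hcv hkkm
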